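/- Let A₁: S¹ → S¹ be defined implicitly by the condition that X(A₁(θ)) is the second intersection of the inward normal line at X(θ) with the curve, i.e., ⟨X(A₁(θ)) - X(θ), T(θ)⟩ = 0 with A₁(θ) ≠ θ. Then A₁'(θ) = -(ℓ(θ) - R(θ))/(R(A₁(θ))⟨T(A₁(θ)), T(θ)⟩), where ℓ(θ) = ‖X(A₁(θ)) - X(θ)‖. In particular A₁'(θ) = 0 if and only if ℓ(θ) = R(θ), i.e., the point X(θ) + R(θ)N(θ) of the evolute lies on the curve. -/

import Mathlib

open Real

/-- planar dot product -/
def dot (v w : ℝ × ℝ) : ℝ := v.1 * w.1 + v.2 * w.2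

/-- length of a planar vector -/
noncomputable def len (v : ℝ × ℝ) : ℝ := Real.sqrt (v.1 ^ 2 + v.2 ^ 2)

/-- unit tangent at tangent angle θ -/
noncomputable def Tvec (θ : ℝ) : ℝ × ℝ := (Real.cos θ, Real.sin θ)

/-- inward unit normal at tangent angle θ -/
noncomputable def Nvec (θ : ℝ) : ℝ × ℝ := (-Real.sin θ, Real.cos θ)

/-- Let `A₁` be the normal return map of a strictly convex closed curve: `X(A₁(θ))` is
the second intersection of the inward normal line at `X(θ)` with the curve, so that
`X(A₁(θ)) - X(θ) = ℓ(θ) N(θ)` with `ℓ(θ) = ‖X(A₁(θ)) - X(θ)‖ > 0`. Then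
`A₁'(θ) = -(ℓ(θ) - R(θ))/(R(A₁(θ))⟨T(A₁(θ)), T(θ)⟩)`; in particular `A₁'(θ) = 0` if
and only if `ℓ(θ) = R(θ)`, i.e. the evolute point `X(θ) + R(θ)N(θ)` lies on the
curve. -/
theorem normal_return_map_derivative
    (h R : ℝ → ℝ) (hh : ContDiff ℝ 2 h)
    (hR : ∀ θ, R θ = deriv (deriv h) θ + h θ)
    (hRpos : ∀ θ, 0 < R θ)
    (X : ℝ → ℝ × ℝ)
    (hX : ∀ θ, X θ = deriv h θ • Tvec θ - h θ • Nvec θ)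
    (A₁ ℓ : ℝ → ℝ) (hA1 : Differentiable ℝ A₁)
    (hℓ : ∀ θ, ℓ θ = len (X (A₁ θ) - X θ))
    (hℓpos : ∀ θ, 0 < ℓ θ)
    (hnormal : ∀ θ, X (A₁ θ) - X θ = ℓ θ • Nvec θ)
    (htrans : ∀ θ, dot (Tvec (A₁ θ)) (Tvec θ) ≠ 0) :
    ∀ θ, deriv A₁ θ = -((ℓ θ - R θ) / (R (A₁ θ) * dot (Tvec (A₁ θ)) (Tvec θ))) ∧
      (deriv A₁ θ = 0 ↔ ℓ θ = R θ) := by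
  -- component functions of X
  set g1 : ℝ → ℝ := fun t => deriv h t * Real.cos t + h t * Real.sin t with hg1def
  set g2 : ℝ → ℝ := fun t => deriv h t * Real.sin t - h t * Real.cos t with hg2def
  have hd1 : Differentiable ℝ h := hh.differentiable (by norm_num)
  have hd2 : Differentiable ℝ (deriv h) := by
    have hh' : ContDiff ℝ ((1 : WithTop ℕ∞) + 1) h := by
      rw [show ((1 : WithTop ℕ∞) + 1) = 2 by norm_num]; exact hh
    exact ((contDiff_succ_iff_deriv.mp hh').2.2).differentiable one_ne_zero
  have hXg : ∀ t, X t = (g1 t, g2 t) := by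
    intro t
    rw [hX]
    simp [Tvec, Nvec, Prod.ext_iff, hg1def, hg2def, Prod.smul_def, smul_eq_mul]
  have hn1 : ∀ t, g1 (A₁ t) - g1 t = -(ℓ t * Real.sin t) := by
    intro t
    have := hnormal t
    rw [hXg, hXg] at this
    have := congrArg Prod.fst this
    simpa [Nvec, Prod.smul_def, smul_eq_mul] using this
  have hn2 : ∀ t, g2 (A₁ t) - g2 t = ℓ t * Real.cos t := by
    intro t
    have := hnormal t
    rw [hXg, hXg] at this
    have := congrArg Prod.snd this
    simpa [Nvec, Prod.smul_def, smul_eq_mul] using this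
  have hg1d : ∀ t, HasDerivAt g1 (R t * Real.cos t) t := by
    intro t
    have : HasDerivAt g1
        ((deriv (deriv h) t * Real.cos t + deriv h t * (-Real.sin t)) +
          (deriv h t * Real.sin t + h t * Real.cos t)) t := by
      exact (((hd2 t).hasDerivAt.mul (Real.hasDerivAt_cos t)).add
        ((hd1 t).hasDerivAt.mul (Real.hasDerivAt_sin t)))
    convert this using 1
    rw [hR]; ring
  have hg2d : ∀ t, HasDerivAt g2 (R t * Real.sin t) t := by
    intro t
    have : HasDerivAt g2
        ((deriv (deriv h) t * Real.sin t + deriv h t * Real.cos t) -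
          (deriv h t * Real.cos t + h t * (-Real.sin t))) t := by
      exact (((hd2 t).hasDerivAt.mul (Real.hasDerivAt_sin t)).sub
        ((hd1 t).hasDerivAt.mul (Real.hasDerivAt_cos t)))
    convert this using 1
    rw [hR]; ring
  intro θ
  -- the function ⟨X(A₁ t) - X t, T t⟩ is identically zero
  have hf0 : (fun t => (g1 (A₁ t) - g1 t) * Real.cos t + (g2 (A₁ t) - g2 t) * Real.sin t)
      = fun _ => (0 : ℝ) := by
    funext t
    rw [hn1, hn2]; ring
  have hA1θ : HasDerivAt A₁ (deriv A₁ θ) θ := (hA1 θ).hasDerivAt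
  have hcomp1 : HasDerivAt (fun t => g1 (A₁ t)) (R (A₁ θ) * Real.cos (A₁ θ) * deriv A₁ θ) θ :=
    (hg1d (A₁ θ)).comp θ hA1θ
  have hcomp2 : HasDerivAt (fun t => g2 (A₁ t)) (R (A₁ θ) * Real.sin (A₁ θ) * deriv A₁ θ) θ :=
    (hg2d (A₁ θ)).comp θ hA1θ
  have hfd : HasDerivAt
      (fun t => (g1 (A₁ t) - g1 t) * Real.cos t + (g2 (A₁ t) - g2 t) * Real.sin t)
      ((R (A₁ θ) * Real.cos (A₁ θ) * deriv A₁ θ - R θ * Real.cos θ) * Real.cos θ +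
        (g1 (A₁ θ) - g1 θ) * (-Real.sin θ) +
        ((R (A₁ θ) * Real.sin (A₁ θ) * deriv A₁ θ - R θ * Real.sin θ) * Real.sin θ +
        (g2 (A₁ θ) - g2 θ) * Real.cos θ)) θ :=
    (((hcomp1.sub (hg1d θ)).mul (Real.hasDerivAt_cos θ)).add
      ((hcomp2.sub (hg2d θ)).mul (Real.hasDerivAt_sin θ)))
  have hzero : HasDerivAt (fun _ : ℝ => (0 : ℝ)) 0 θ := hasDerivAt_const θ 0
  rw [hf0] at hfd
  have hD0 := hfd.unique hzero
  rw [hn1, hn2] at hD0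
  have key : deriv A₁ θ * (R (A₁ θ) * dot (Tvec (A₁ θ)) (Tvec θ)) = R θ - ℓ θ := by
    have hc : Real.cos θ ^ 2 + Real.sin θ ^ 2 = 1 := by
      rw [add_comm]; exact Real.sin_sq_add_cos_sq θ
    simp only [dot, Tvec]
    linear_combination hD0 + (R θ - ℓ θ) * hc
  have hden : R (A₁ θ) * dot (Tvec (A₁ θ)) (Tvec θ) ≠ 0 :=
    mul_ne_zero (ne_of_gt (hRpos (A₁ θ))) (htrans θ)
  constructor
  · rw [neg_div', eq_div_iff hden]
    linarith [key]
  · constructor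
    · intro hz
      rw [hz, zero_mul] at key
      linarith
    · intro hl
      rw [hl, sub_self] at key
      exact (mul_eq_zero.mp key).resolve_right hden
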